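/- For every z ∈ ℂ with 0 < |z| ≤ r, the function |·|_z on A_r defined by |f|_z := |f(z)|^{log r / log |z|} is a multiplicative seminorm on A_r bounded by ‖·‖_r: |0|_z = 0, |1|_z = 1, |f·g|_z = |f|_z · |g|_z, |f + g|_z ≤ |f|_z + |g|_z, and |f|_z ≤ ‖f‖_r for all f, g ∈ A_r. -/

import Mathlib

/-- The hybrid norm on `ℂ`: `‖z‖_hyb = max {1, |z|}` for `z ≠ 0`, and `‖0‖_hyb = 0`. -/
noncomputable def hybNorm (z : ℂ) : ℝ := if z = 0 then 0 else max 1 (‖z‖)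

/-- `f ∈ A_r`:  a formal Laurent series `f = Σ aₙ tⁿ ∈ ℂ((t))` belongs to `A_r` when
`Σₙ ‖aₙ‖_hyb rⁿ < ∞`. -/
def memAr (r : ℝ) (f : LaurentSeries ℂ) : Prop :=
  Summable (fun n : ℤ => hybNorm (f.coeff n) * r ^ n)

/-- The norm `‖f‖_r = Σₙ ‖aₙ‖_hyb rⁿ` on `A_r`. -/
noncomputable def normAr (r : ℝ) (f : LaurentSeries ℂ) : ℝ :=
  ∑' n : ℤ, hybNorm (f.coeff n) * r ^ n

/-- The evaluation `ev_z(f) = f(z) = Σₙ aₙ zⁿ` of a formal Laurent series at `z ≠ 0`. -/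
noncomputable def evalAr (z : ℂ) (f : LaurentSeries ℂ) : ℂ :=
  ∑' n : ℤ, f.coeff n * z ^ n

/-- The seminorm `|f|_z := |f(z)| ^ (log r / log |z|)`, for `0 < |z| ≤ r`. -/
noncomputable def seminormAt (r : ℝ) (z : ℂ) (f : LaurentSeries ℂ) : ℝ :=
  ‖evalAr z f‖ ^ (Real.log r / Real.log (‖z‖))

lemma hybNorm_nonneg (w : ℂ) : 0 ≤ hybNorm w := by
  unfold hybNorm; split
  · exact le_refl 0
  · exact le_trans zero_le_one (le_max_left _ _)

lemma abs_le_hybNorm (w : ℂ) : ‖w‖ ≤ hybNorm w := by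
  unfold hybNorm; split
  · simp_all
  · exact le_max_right _ _

lemma rpow_abs_le_hybNorm (w : ℂ) {p : ℝ} (hp0 : 0 < p) (hp1 : p ≤ 1) :
    (‖w‖) ^ p ≤ hybNorm w := by
  unfold hybNorm; split
  · next h => subst h; simp [Real.zero_rpow hp0.ne']
  · rcases le_total (‖w‖) 1 with h | h
    · exact le_trans (Real.rpow_le_one (norm_nonneg w) h hp0.le) (le_max_left _ _)
    · calc (‖w‖) ^ p ≤ (‖w‖) ^ (1 : ℝ) :=
            Real.rpow_le_rpow_of_exponent_le h hp1
        _ = ‖w‖ := Real.rpow_one _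
        _ ≤ _ := le_max_right _ _

/-- The negative part of the support of a Laurent series is finite. -/
lemma support_neg_finite (f : LaurentSeries ℂ) :
    (Function.support f.coeff ∩ Set.Iio (0 : ℤ)).Finite := by
  rcases Set.eq_empty_or_nonempty (Function.support f.coeff ∩ Set.Iio (0 : ℤ)) with h | h
  · simp [h]
  · have hwf : (Function.support f.coeff ∩ Set.Iio (0 : ℤ)).IsWF :=
      f.isWF_support.mono Set.inter_subset_left
    refine Set.Finite.subset (Set.finite_Icc (hwf.min h) (-1)) ?_
    intro n hn
    exact Set.mem_Icc.2 ⟨hwf.min_le h hn, by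
      have : n < 0 := hn.2
      omega⟩

lemma summable_abs_eval (r : ℝ) (hr0 : 0 < r) (z : ℂ) (hz0 : z ≠ 0)
    (hzr : ‖z‖ ≤ r) (f : LaurentSeries ℂ) (hf : memAr r f) :
    Summable (fun n : ℤ => ‖f.coeff n‖ * ‖z‖ ^ n) := by
  have habs : 0 < ‖z‖ := norm_pos_iff.mpr hz0
  apply Summable.of_norm_bounded_eventually hf
  have hfin : (Function.support f.coeff ∩ Set.Iio (0 : ℤ)).Finite := support_neg_finite f
  refine Set.Finite.eventually_cofinite_notMem hfin |>.mono ?_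
  intro n hn
  rw [Real.norm_of_nonneg (by positivity)]
  rcases le_or_gt 0 n with h0 | h0
  · obtain ⟨m, rfl⟩ := Int.eq_ofNat_of_zero_le h0
    rw [zpow_natCast, zpow_natCast]
    exact mul_le_mul (abs_le_hybNorm _) (pow_le_pow_left₀ habs.le hzr m)
      (by positivity) (hybNorm_nonneg _)
  · have : f.coeff n = 0 := by
      by_contra hne
      exact hn ⟨hne, h0⟩
    simp [this, hybNorm]

lemma summable_norm_eval (r : ℝ) (hr0 : 0 < r) (z : ℂ) (hz0 : z ≠ 0)
    (hzr : ‖z‖ ≤ r) (f : LaurentSeries ℂ) (hf : memAr r f) :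
    Summable (fun n : ℤ => ‖f.coeff n * z ^ n‖) := by
  have := summable_abs_eval r hr0 z hz0 hzr f hf
  simpa [norm_mul, norm_zpow] using this

lemma real_rpow_add_le {x y p : ℝ} (hx : 0 ≤ x) (hy : 0 ≤ y) (hp0 : 0 ≤ p) (hp1 : p ≤ 1) :
    (x + y) ^ p ≤ x ^ p + y ^ p := by
  lift x to NNReal using hx
  lift y to NNReal using hy
  have := NNReal.rpow_add_le_add_rpow x y hp0 hp1
  exact_mod_cast this

lemma finset_rpow_sum_le {p : ℝ} (hp0 : 0 < p) (hp1 : p ≤ 1) (u : ℤ → ℝ)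
    (hu : ∀ n, 0 ≤ u n) (s : Finset ℤ) :
    (∑ n ∈ s, u n) ^ p ≤ ∑ n ∈ s, u n ^ p := by
  classical
  induction s using Finset.cons_induction with
  | empty => simp [Real.zero_rpow hp0.ne']
  | cons a s ha ih =>
    rw [Finset.sum_cons, Finset.sum_cons]
    calc (u a + ∑ n ∈ s, u n) ^ p ≤ u a ^ p + (∑ n ∈ s, u n) ^ p :=
          real_rpow_add_le (hu a) (Finset.sum_nonneg fun n _ => hu n) hp0.le hp1
      _ ≤ u a ^ p + ∑ n ∈ s, u n ^ p := by gcongr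

lemma rpow_tsum_le {p : ℝ} (hp0 : 0 < p) (hp1 : p ≤ 1) (u v : ℤ → ℝ)
    (hu : ∀ n, 0 ≤ u n) (hsu : Summable u) (hv : Summable v)
    (hle : ∀ n, u n ^ p ≤ v n) :
    (∑' n, u n) ^ p ≤ ∑' n, v n := by
  have hsup : Summable (fun n => u n ^ p) :=
    Summable.of_nonneg_of_le (fun n => Real.rpow_nonneg (hu n) p) hle hv
  have h1 : Filter.Tendsto (fun s : Finset ℤ => (∑ n ∈ s, u n) ^ p)
      Filter.atTop (nhds ((∑' n, u n) ^ p)) := by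
    have hc : ContinuousAt (fun x : ℝ => x ^ p) (∑' n, u n) :=
      Real.continuousAt_rpow_const _ _ (Or.inr hp0.le)
    exact hc.tendsto.comp hsu.hasSum
  have h2 : Filter.Tendsto (fun s : Finset ℤ => ∑ n ∈ s, u n ^ p)
      Filter.atTop (nhds (∑' n, u n ^ p)) := hsup.hasSum
  have key : (∑' n, u n) ^ p ≤ ∑' n, u n ^ p :=
    le_of_tendsto_of_tendsto' h1 h2 (fun s => finset_rpow_sum_le hp0 hp1 u hu s)
  exact key.trans (Summable.tsum_le_tsum hle hsup hv)

/-- Evaluation is multiplicative on `A_r`. -/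
lemma evalAr_mul (r : ℝ) (hr0 : 0 < r) (z : ℂ) (hz0 : z ≠ 0)
    (hzr : ‖z‖ ≤ r) (f g : LaurentSeries ℂ) (hf : memAr r f) (hg : memAr r g) :
    evalAr z (f * g) = evalAr z f * evalAr z g := by
  classical
  set F : ℤ → ℂ := fun n => f.coeff n * z ^ n with hF
  set G : ℤ → ℂ := fun n => g.coeff n * z ^ n with hG
  have hFs : Summable fun n => ‖F n‖ := summable_norm_eval r hr0 z hz0 hzr f hf
  have hGs : Summable fun n => ‖G n‖ := summable_norm_eval r hr0 z hz0 hzr g hg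
  have hprod : evalAr z f * evalAr z g = ∑' p : ℤ × ℤ, F p.1 * G p.2 :=
    tsum_mul_tsum_of_summable_norm hFs hGs
  have hK : Summable (fun p : ℤ × ℤ => F p.1 * G p.2) :=
    summable_mul_of_summable_norm hFs hGs
  let e : (ℤ × ℤ) ≃ (ℤ × ℤ) :=
    ⟨fun p => (p.1 - p.2, p.2), fun p => (p.1 + p.2, p.2),
      fun p => by simp, fun p => by simp⟩
  have he : ∑' p : ℤ × ℤ, F (p.1 - p.2) * G p.2 = ∑' p : ℤ × ℤ, F p.1 * G p.2 :=
    e.tsum_eq (fun p : ℤ × ℤ => F p.1 * G p.2)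
  have hK' : Summable (fun p : ℤ × ℤ => F (p.1 - p.2) * G p.2) :=
    (e.summable_iff (f := fun p : ℤ × ℤ => F p.1 * G p.2)).2 hK
  -- inner sums have finite support
  have hinner : ∀ n : ℤ, ∑' j : ℤ, F (n - j) * G j = (f * g).coeff n * z ^ n := by
    intro n
    have hFG : ∀ j : ℤ, F (n - j) * G j = (f.coeff (n - j) * g.coeff j) * z ^ n := by
      intro j
      simp only [hF, hG]
      rw [mul_mul_mul_comm, ← zpow_add₀ hz0, sub_add_cancel]
    simp only [hFG]
    rw [tsum_mul_right]
    congr 1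
    set t := Finset.antidiagonal f.isPWO_support g.isPWO_support n with ht
    set s : Finset ℤ := t.image Prod.snd with hs
    have h0 : ∀ j ∉ s, f.coeff (n - j) * g.coeff j = 0 := by
      intro j hj
      by_contra hne
      have h1 : f.coeff (n - j) ≠ 0 := fun h => hne (by simp [h])
      have h2 : g.coeff j ≠ 0 := fun h => hne (by simp [h])
      have hmem : ((n - j, j) : ℤ × ℤ) ∈ t := by
        rw [ht, Finset.mem_addAntidiagonal]
        exact ⟨h1, h2, sub_add_cancel n j⟩
      exact hj (Finset.mem_image.2 ⟨(n - j, j), hmem, rfl⟩)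
    rw [tsum_eq_sum h0]
    have hinj : ∀ x ∈ t, ∀ y ∈ t, x.2 = y.2 → x = y := by
      intro x hx y hy hxy
      rw [ht, Finset.mem_addAntidiagonal] at hx hy
      have : x.1 = y.1 := by omega
      exact Prod.ext this hxy
    rw [hs, Finset.sum_image hinj, HahnSeries.coeff_mul]
    refine Finset.sum_congr rfl fun p hp => ?_
    rw [Finset.mem_addAntidiagonal] at hp
    have : n - p.2 = p.1 := by omega
    rw [this]
  have hfiber : ∀ n : ℤ, Summable fun j : ℤ => F (n - j) * G j := by
    intro n
    set t := Finset.antidiagonal f.isPWO_support g.isPWO_support n with ht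
    apply summable_of_ne_finset_zero (s := t.image Prod.snd)
    intro j hj
    have h0 : f.coeff (n - j) * g.coeff j = 0 := by
      by_contra hne
      have h1 : f.coeff (n - j) ≠ 0 := fun h => hne (by simp [h])
      have h2 : g.coeff j ≠ 0 := fun h => hne (by simp [h])
      have hmem : ((n - j, j) : ℤ × ℤ) ∈ t := by
        rw [ht, Finset.mem_addAntidiagonal]
        exact ⟨h1, h2, sub_add_cancel n j⟩
      exact hj (Finset.mem_image.2 ⟨(n - j, j), hmem, rfl⟩)
    simp only [hF, hG]
    rw [mul_mul_mul_comm, ← zpow_add₀ hz0, sub_add_cancel, h0, zero_mul]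
  calc evalAr z (f * g) = ∑' n : ℤ, (f * g).coeff n * z ^ n := rfl
    _ = ∑' n : ℤ, ∑' j : ℤ, F (n - j) * G j := by
        exact tsum_congr fun n => (hinner n).symm
    _ = ∑' p : ℤ × ℤ, F (p.1 - p.2) * G p.2 := (Summable.tsum_prod' hK' hfiber).symm
    _ = ∑' p : ℤ × ℤ, F p.1 * G p.2 := he
    _ = evalAr z f * evalAr z g := hprod.symm

/-- For every `z ∈ ℂ` with `0 < |z| ≤ r`, the function `|f|_z = |f(z)|^(log r / log |z|)`
is a multiplicative seminorm on `A_r` bounded by `‖·‖_r`: `|0|_z = 0`, `|1|_z = 1`,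
`|fg|_z = |f|_z·|g|_z`, `|f+g|_z ≤ |f|_z + |g|_z`, and `|f|_z ≤ ‖f‖_r`. -/
theorem seminormAt_is_bounded_mult_seminorm (r : ℝ) (hr0 : 0 < r) (hr1 : r < 1)
    (z : ℂ) (hz0 : z ≠ 0) (hzr : ‖z‖ ≤ r) :
    seminormAt r z 0 = 0 ∧
    seminormAt r z 1 = 1 ∧
    ∀ f g : LaurentSeries ℂ, memAr r f → memAr r g →
      seminormAt r z (f * g) = seminormAt r z f * seminormAt r z g ∧
      seminormAt r z (f + g) ≤ seminormAt r z f + seminormAt r z g ∧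
      seminormAt r z f ≤ normAr r f := by
  have habs : 0 < ‖z‖ := norm_pos_iff.mpr hz0
  have habs1 : ‖z‖ < 1 := lt_of_le_of_lt hzr hr1
  have hlogz : Real.log (‖z‖) < 0 := Real.log_neg habs habs1
  have hlogr : Real.log r < 0 := Real.log_neg hr0 hr1
  have hle : Real.log (‖z‖) ≤ Real.log r := Real.log_le_log habs hzr
  set p : ℝ := Real.log r / Real.log (‖z‖) with hp
  have hp0 : 0 < p := div_pos_iff.2 (Or.inr ⟨hlogr, hlogz⟩)
  have hp1 : p ≤ 1 := by
    rw [hp, div_le_one_iff]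
    exact Or.inr (Or.inr ⟨hlogz, hle⟩)
  have hzp : ‖z‖ ^ p = r := by
    have : p = Real.logb (‖z‖) r := by rw [hp, Real.logb]
    rw [this]
    exact Real.rpow_logb habs habs1.ne hr0
  have hzpow : ∀ n : ℤ, (‖z‖ ^ n) ^ p = r ^ n := by
    intro n
    rw [← Real.rpow_intCast (‖z‖) n, ← Real.rpow_mul habs.le, mul_comm,
      Real.rpow_mul habs.le, hzp, Real.rpow_intCast]
  refine ⟨?_, ?_, ?_⟩
  · -- |0|_z = 0
    have : evalAr z (0 : LaurentSeries ℂ) = 0 := by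
      simp [evalAr]
    rw [seminormAt, this]
    simp [← hp, Real.zero_rpow hp0.ne']
  · -- |1|_z = 1
    have : evalAr z (1 : LaurentSeries ℂ) = 1 := by
      rw [evalAr, tsum_eq_single 0 (fun n hn => by simp [HahnSeries.coeff_one, hn])]
      simp [HahnSeries.coeff_one]
    rw [seminormAt, this]
    simp
  · intro f g hf hg
    have hFs : Summable fun n : ℤ => ‖f.coeff n * z ^ n‖ :=
      summable_norm_eval r hr0 z hz0 hzr f hf
    have hGs : Summable fun n : ℤ => ‖g.coeff n * z ^ n‖ :=
      summable_norm_eval r hr0 z hz0 hzr g hg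
    refine ⟨?_, ?_, ?_⟩
    · -- multiplicativity
      rw [seminormAt, seminormAt, seminormAt,
        evalAr_mul r hr0 z hz0 hzr f g hf hg, norm_mul,
        Real.mul_rpow (norm_nonneg _) (norm_nonneg _)]
    · -- triangle inequality
      have hadd : evalAr z (f + g) = evalAr z f + evalAr z g := by
        rw [evalAr, evalAr, evalAr, ← Summable.tsum_add hFs.of_norm hGs.of_norm]
        exact tsum_congr fun n => by rw [HahnSeries.coeff_add, add_mul]
      rw [seminormAt, seminormAt, seminormAt, hadd]
      calc ‖evalAr z f + evalAr z g‖ ^ p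
          ≤ (‖evalAr z f‖ + ‖evalAr z g‖) ^ p :=
            Real.rpow_le_rpow (norm_nonneg _)
              (norm_add_le _ _) hp0.le
        _ ≤ _ := real_rpow_add_le (norm_nonneg _) (norm_nonneg _)
              hp0.le hp1
    · -- bound
      set u : ℤ → ℝ := fun n => ‖f.coeff n‖ * ‖z‖ ^ n with hu
      have hsu : Summable u := summable_abs_eval r hr0 z hz0 hzr f hf
      have hnorm : ‖evalAr z f‖ ≤ ∑' n, u n := by
        have := norm_tsum_le_tsum_norm hFs
        rw [evalAr]
        simpa [norm_mul, norm_zpow, hu] using this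
      have hunn : ∀ n, 0 ≤ u n := fun n => by positivity
      have hle2 : ∀ n : ℤ, u n ^ p ≤ hybNorm (f.coeff n) * r ^ n := by
        intro n
        rw [hu]
        rw [Real.mul_rpow (norm_nonneg _) (by positivity), hzpow n]
        have hr' : (0:ℝ) ≤ r ^ n := by positivity
        exact mul_le_mul_of_nonneg_right (rpow_abs_le_hybNorm _ hp0 hp1) hr'
      calc seminormAt r z f = ‖evalAr z f‖ ^ p := rfl
        _ ≤ (∑' n, u n) ^ p :=
            Real.rpow_le_rpow (norm_nonneg _) hnorm hp0.le
        _ ≤ ∑' n, hybNorm (f.coeff n) * r ^ n :=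
            rpow_tsum_le hp0 hp1 u _ hunn hsu hf hle2
        _ = normAr r f := rfl
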